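/- Fix 1 ≤ n ≤ L and 0 ≤ k ≤ n−1 for the two fixed connected components. The monomial y^k v_{n−k} appears in s_n^{(2k+1)} with coefficient b̃_{n−k} ∏_{j=0}^{k−1} a_{n−j} c_{n−j} (the empty product for k=0 being 1); moreover, no monomial of the form y^r v_{n−k} with r ≥ 0 appears in s_n^{(ℓ)} for any ℓ < 2k+1, and y^k v_{n−k} is the only monomial of the form y^r v_{n−k} appearing in s_n^{(2k+1)}. -/

import Mathlib

open MvPolynomial Finsupp

variable {σ : Type*}

/-- The total (Lie) derivative of a polynomial `φ` associated to the polynomial vector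
field `f`: `φ̇ = Σ_x (∂φ/∂x)·f x`. -/
noncomputable def lieD [Fintype σ] (f : σ → MvPolynomial σ ℝ)
    (φ : MvPolynomial σ ℝ) : MvPolynomial σ ℝ :=
  ∑ x : σ, MvPolynomial.pderiv x φ * f x

/-- Iterated total (Lie) derivative. -/
noncomputable def lieDIter [Fintype σ] (f : σ → MvPolynomial σ ℝ) :
    ℕ → MvPolynomial σ ℝ → MvPolynomial σ ℝ
  | 0, φ => φ
  | n + 1, φ => lieD f (lieDIter f n φ)

/-- Indicator of a species inside a complex, as a real number. -/
def ind [DecidableEq σ] (a x : σ) : ℝ := if a = x then 1 else 0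


/-! ### Auxiliary general lemmas -/

theorem my_coeff_pderiv [DecidableEq σ] (A : σ) (φ : MvPolynomial σ ℝ) (m : σ →₀ ℕ) :
    coeff m (pderiv A φ) = (m A + 1 : ℝ) * coeff (m + single A 1) φ := by
  induction φ using MvPolynomial.induction_on' with
  | monomial s a =>
    rw [pderiv_monomial, coeff_monomial, coeff_monomial]
    by_cases h : s = m + single A 1
    · subst h
      rw [if_pos, if_pos rfl]
      · push_cast
        simp [Finsupp.add_apply, Finsupp.single_apply]
        ring
      · ext x
        simp [Finsupp.tsub_apply, Finsupp.add_apply, Finsupp.single_apply]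
    · rw [if_neg h]
      by_cases h2 : s - single A 1 = m
      · rw [if_pos h2]
        have : s A = 0 := by
          by_contra hA
          apply h
          have key : ∀ x, s x - (Finsupp.single A 1) x = m x := by
            intro x
            have := congrArg (fun f => f x) h2
            simpa [Finsupp.tsub_apply] using this
          ext x
          have kx := key x
          simp only [Finsupp.add_apply, Finsupp.single_apply] at kx ⊢
          by_cases hx : A = x
          · rw [hx] at hA
            rw [if_pos hx] at kx ⊢
            omega
          · rw [if_neg hx] at kx ⊢
            omega
        simp [this]
      · simp [if_neg h2]
  | add p q hp hq => simp [map_add, coeff_add, hp, hq]; ring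

theorem my_sum_pd_ind [Fintype σ] [DecidableEq σ] (a : σ) (φ M : MvPolynomial σ ℝ) :
    ∑ x : σ, pderiv x φ * (C (ind a x) * M) = pderiv a φ * M := by
  have h : ∀ x : σ, pderiv x φ * (C (ind a x) * M) =
      if a = x then pderiv x φ * M else 0 := by
    intro x
    unfold ind
    split_ifs with h
    · subst h; simp
    · simp
  rw [Finset.sum_congr rfl fun x _ => h x, Finset.sum_ite_eq]
  simp

/-- A chemical reaction network of the structural form of Assumption 1: the connected
components are indexed by `ι`; component `i` is
`Y i + S i 0 ⇄ U i 1 → Y i + S i 1 ⇄ U i 2 → ⋯ ⇄ U i (L i) → Y i + S i (L i)`,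
with rate constants `a_{i,j}, b_{i,j}, c_{i,j}` for the reactions
`Y i + S i (j-1) → U i j`, `U i j → Y i + S i (j-1)`, `U i j → Y i + S i j`
(`1 ≤ j ≤ L i`). Only the values `S i j` for `j ≤ L i` and `U i j` for
`1 ≤ j ≤ L i` are relevant. -/
structure A1Network (σ : Type*) where
  ι : Type
  [fintypeι : Fintype ι]
  L : ι → ℕ
  Lpos : ∀ i, 1 ≤ L i
  Y : ι → σ
  S : ι → ℕ → σ
  U : ι → ℕ → σ

attribute [instance] A1Network.fintypeι

namespace A1Network

variable [Fintype σ] [DecidableEq σ]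

/-- Rate-constant index: component `i`, block `j+1` (for `j : Fin (L i)`), and
`0, 1, 2` for the constants `a, b, c` of the block. -/
def Param (N : A1Network σ) : Type := (i : N.ι) × Fin (N.L i) × Fin 3

instance (N : A1Network σ) : Fintype N.Param :=
  inferInstanceAs (Fintype ((i : N.ι) × Fin (N.L i) × Fin 3))

/-- `x` is an intermediate species of the network. -/
def inter (N : A1Network σ) (x : σ) : Prop :=
  ∃ i, ∃ j : Fin (N.L i), x = N.U i ((j : ℕ) + 1)

/-- The non-intermediate `x₁` reacts with the non-intermediate `x₂`
(a reaction `x₁ + x₂ → U` exists). -/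
def reactsWith (N : A1Network σ) (x₁ x₂ : σ) : Prop :=
  ∃ i, ∃ j : Fin (N.L i),
    (x₁ = N.Y i ∧ x₂ = N.S i (j : ℕ)) ∨ (x₂ = N.Y i ∧ x₁ = N.S i (j : ℕ))

/-- The intermediate `u` reacts to the non-intermediate `x`
(a reaction `u → x + X₂` exists). -/
def reactsTo (N : A1Network σ) (u x : σ) : Prop :=
  ∃ i, ∃ j : Fin (N.L i), u = N.U i ((j : ℕ) + 1) ∧
    (x = N.Y i ∨ x = N.S i (j : ℕ) ∨ x = N.S i ((j : ℕ) + 1))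

/-- The distinctness/uniqueness requirements of Assumption 1: the intermediates of the
entire network are pairwise distinct and distinct from all non-intermediates; the
non-intermediates of one component are pairwise distinct; each complex lies in a
unique connected component. -/
structure Assumption1 (N : A1Network σ) : Prop where
  U_inj : ∀ i (j : Fin (N.L i)) i' (j' : Fin (N.L i')),
    N.U i ((j : ℕ) + 1) = N.U i' ((j' : ℕ) + 1) → i = i' ∧ (j : ℕ) = (j' : ℕ)
  U_ne_Y : ∀ i (j : Fin (N.L i)) i', N.U i ((j : ℕ) + 1) ≠ N.Y i'
  U_ne_S : ∀ i (j : Fin (N.L i)) i' j', j' ≤ N.L i' → N.U i ((j : ℕ) + 1) ≠ N.S i' j'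
  S_inj : ∀ i j j', j ≤ N.L i → j' ≤ N.L i → N.S i j = N.S i j' → j = j'
  complex_unique : ∀ i i' j j', j ≤ N.L i → j' ≤ N.L i' →
    (∀ x : σ, ind (N.Y i) x + ind (N.S i j) x = ind (N.Y i') x + ind (N.S i' j') x) →
    i = i'

/-- `part` is a partition of the species as in Assumption 2: intermediates form class `0`;
all the substrates and products of a component lie in one class `α ≥ 1` which contains
neither the enzyme of the component nor any intermediate. -/
def IsPartition (N : A1Network σ) (part : σ → ℕ) : Prop :=
  (∀ x, N.inter x → part x = 0) ∧
  (∀ i : N.ι, ∃ α, 1 ≤ α ∧ (∀ j, j ≤ N.L i → part (N.S i j) = α) ∧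
    part (N.Y i) ≠ α ∧ part (N.Y i) ≠ 0)

/-- Assumption 2: there exists a partition as above. -/
def Assumption2 (N : A1Network σ) : Prop := ∃ part, N.IsPartition part

/-- The mass-action right-hand side of the induced dynamical system:
`ẋ = Σ_{y→y'} k_{yy'} x^y (y'-y)`. -/
noncomputable def rhs (N : A1Network σ) (k : N.Param → ℝ) (x : σ) : MvPolynomial σ ℝ :=
  ∑ i : N.ι, ∑ j : Fin (N.L i),
    (C (k ⟨i, j, 0⟩ *
          (ind (N.U i ((j : ℕ) + 1)) x - ind (N.Y i) x - ind (N.S i (j : ℕ)) x)) *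
        (X (N.Y i) * X (N.S i (j : ℕ)))
      + C (k ⟨i, j, 1⟩ *
          (ind (N.Y i) x + ind (N.S i (j : ℕ)) x - ind (N.U i ((j : ℕ) + 1)) x)) *
        X (N.U i ((j : ℕ) + 1))
      + C (k ⟨i, j, 2⟩ *
          (ind (N.Y i) x + ind (N.S i ((j : ℕ) + 1)) x - ind (N.U i ((j : ℕ) + 1)) x)) *
        X (N.U i ((j : ℕ) + 1)))

/-- `x^{(ℓ)}(x, k)`: the `ℓ`-th iterated total derivative of the variable `x`. -/
noncomputable def deriv (N : A1Network σ) (k : N.Param → ℝ) (ℓ : ℕ) (x : σ) :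
    MvPolynomial σ ℝ :=
  lieDIter (N.rhs k) ℓ (X x)


/-! ### Master coefficient formula -/

set_option linter.unusedSectionVars false

/-- Weight of the complex `Y i + S i j`. -/
noncomputable def prW (N : A1Network σ) (i : N.ι) (j : Fin (N.L i)) : σ →₀ ℕ :=
  single (N.Y i) 1 + single (N.S i (j : ℕ)) 1

/-- Weight of the complex `U i (j+1)`. -/
noncomputable def uuW (N : A1Network σ) (i : N.ι) (j : Fin (N.L i)) : σ →₀ ℕ :=
  single (N.U i ((j : ℕ) + 1)) 1

theorem lieD_rhs_eq (N : A1Network σ) (k : N.Param → ℝ)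
    (φ : MvPolynomial σ ℝ) :
    lieD (N.rhs k) φ = ∑ i : N.ι, ∑ j : Fin (N.L i),
      (C (k ⟨i, j, 0⟩) *
          ((pderiv (N.U i ((j : ℕ) + 1)) φ - pderiv (N.Y i) φ - pderiv (N.S i (j : ℕ)) φ) *
            monomial (N.prW i j) 1)
        + C (k ⟨i, j, 1⟩) *
          ((pderiv (N.Y i) φ + pderiv (N.S i (j : ℕ)) φ - pderiv (N.U i ((j : ℕ) + 1)) φ) *
            monomial (N.uuW i j) 1)
        + C (k ⟨i, j, 2⟩) *
          ((pderiv (N.Y i) φ + pderiv (N.S i ((j : ℕ) + 1)) φ - pderiv (N.U i ((j : ℕ) + 1)) φ) *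
            monomial (N.uuW i j) 1)) := by
  unfold lieD rhs
  have hswap : ∀ x : σ, pderiv x φ * (∑ i : N.ι, ∑ j : Fin (N.L i),
      (C (k ⟨i, j, 0⟩ *
          (ind (N.U i ((j : ℕ) + 1)) x - ind (N.Y i) x - ind (N.S i (j : ℕ)) x)) *
        (X (N.Y i) * X (N.S i (j : ℕ)))
      + C (k ⟨i, j, 1⟩ *
          (ind (N.Y i) x + ind (N.S i (j : ℕ)) x - ind (N.U i ((j : ℕ) + 1)) x)) *
        X (N.U i ((j : ℕ) + 1))
      + C (k ⟨i, j, 2⟩ *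
          (ind (N.Y i) x + ind (N.S i ((j : ℕ) + 1)) x - ind (N.U i ((j : ℕ) + 1)) x)) *
        X (N.U i ((j : ℕ) + 1)))) = ∑ i : N.ι, ∑ j : Fin (N.L i), pderiv x φ *
      (C (k ⟨i, j, 0⟩ *
          (ind (N.U i ((j : ℕ) + 1)) x - ind (N.Y i) x - ind (N.S i (j : ℕ)) x)) *
        (X (N.Y i) * X (N.S i (j : ℕ)))
      + C (k ⟨i, j, 1⟩ *
          (ind (N.Y i) x + ind (N.S i (j : ℕ)) x - ind (N.U i ((j : ℕ) + 1)) x)) *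
        X (N.U i ((j : ℕ) + 1))
      + C (k ⟨i, j, 2⟩ *
          (ind (N.Y i) x + ind (N.S i ((j : ℕ) + 1)) x - ind (N.U i ((j : ℕ) + 1)) x)) *
        X (N.U i ((j : ℕ) + 1))) := by
    intro x
    rw [Finset.mul_sum]
    exact Finset.sum_congr rfl fun i _ => by rw [Finset.mul_sum]
  rw [Finset.sum_congr rfl fun x _ => hswap x, Finset.sum_comm]
  refine Finset.sum_congr rfl fun i _ => ?_
  rw [Finset.sum_comm]
  refine Finset.sum_congr rfl fun j _ => ?_
  have expand : ∀ x : σ, pderiv x φ *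
      (C (k ⟨i, j, 0⟩ *
          (ind (N.U i ((j : ℕ) + 1)) x - ind (N.Y i) x - ind (N.S i (j : ℕ)) x)) *
        (X (N.Y i) * X (N.S i (j : ℕ)))
      + C (k ⟨i, j, 1⟩ *
          (ind (N.Y i) x + ind (N.S i (j : ℕ)) x - ind (N.U i ((j : ℕ) + 1)) x)) *
        X (N.U i ((j : ℕ) + 1))
      + C (k ⟨i, j, 2⟩ *
          (ind (N.Y i) x + ind (N.S i ((j : ℕ) + 1)) x - ind (N.U i ((j : ℕ) + 1)) x)) *
        X (N.U i ((j : ℕ) + 1)))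
      = C (k ⟨i, j, 0⟩) * (pderiv x φ * (C (ind (N.U i ((j : ℕ) + 1)) x) * (X (N.Y i) * X (N.S i (j : ℕ)))))
        - C (k ⟨i, j, 0⟩) * (pderiv x φ * (C (ind (N.Y i) x) * (X (N.Y i) * X (N.S i (j : ℕ)))))
        - C (k ⟨i, j, 0⟩) * (pderiv x φ * (C (ind (N.S i (j : ℕ)) x) * (X (N.Y i) * X (N.S i (j : ℕ)))))
        + (C (k ⟨i, j, 1⟩) * (pderiv x φ * (C (ind (N.Y i) x) * X (N.U i ((j : ℕ) + 1))))
          + C (k ⟨i, j, 1⟩) * (pderiv x φ * (C (ind (N.S i (j : ℕ)) x) * X (N.U i ((j : ℕ) + 1))))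
          - C (k ⟨i, j, 1⟩) * (pderiv x φ * (C (ind (N.U i ((j : ℕ) + 1)) x) * X (N.U i ((j : ℕ) + 1)))))
        + (C (k ⟨i, j, 2⟩) * (pderiv x φ * (C (ind (N.Y i) x) * X (N.U i ((j : ℕ) + 1))))
          + C (k ⟨i, j, 2⟩) * (pderiv x φ * (C (ind (N.S i ((j : ℕ) + 1)) x) * X (N.U i ((j : ℕ) + 1))))
          - C (k ⟨i, j, 2⟩) * (pderiv x φ * (C (ind (N.U i ((j : ℕ) + 1)) x) * X (N.U i ((j : ℕ) + 1))))) := by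
    intro x
    simp only [map_mul, map_sub, map_add]
    ring
  rw [Finset.sum_congr rfl fun x _ => expand x]
  simp only [Finset.sum_add_distrib, Finset.sum_sub_distrib, ← Finset.mul_sum,
    my_sum_pd_ind]
  have hM0 : (X (N.Y i) * X (N.S i (j:ℕ)) : MvPolynomial σ ℝ) = monomial (N.prW i j) 1 := by
    rw [X, X, monomial_mul, one_mul]
    rfl
  have hM1 : (X (N.U i ((j:ℕ)+1)) : MvPolynomial σ ℝ) = monomial (N.uuW i j) 1 := by
    rw [X]
    rfl
  rw [hM0, hM1]
  ring

/-- A single transfer coefficient. -/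
noncomputable def Tc' (φ : MvPolynomial σ ℝ) (m w : σ →₀ ℕ) (A : σ) : ℝ :=
  if w ≤ m then ((m - w) A + 1 : ℝ) * coeff (m - w + single A 1) φ else 0

theorem Tc_eq (φ : MvPolynomial σ ℝ) (m w : σ →₀ ℕ) (A : σ) :
    coeff m (pderiv A φ * monomial w (1:ℝ)) = Tc' φ m w A := by
  rw [coeff_mul_monomial', Tc']
  split_ifs
  · rw [my_coeff_pderiv]; ring
  · rfl

theorem Tc_zero {φ : MvPolynomial σ ℝ} {m w : σ →₀ ℕ} {A : σ}
    (h : w ≤ m → coeff (m - w + single A 1) φ = 0) : Tc' φ m w A = 0 := by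
  rw [Tc']
  split_ifs with hw
  · rw [h hw, mul_zero]
  · rfl

theorem coeff_lieD_rhs (N : A1Network σ) (k : N.Param → ℝ)
    (φ : MvPolynomial σ ℝ) (m : σ →₀ ℕ) :
    coeff m (lieD (N.rhs k) φ) = ∑ i : N.ι, ∑ j : Fin (N.L i),
      (k ⟨i, j, 0⟩ * (Tc' φ m (N.prW i j) (N.U i ((j : ℕ) + 1))
          - Tc' φ m (N.prW i j) (N.Y i) - Tc' φ m (N.prW i j) (N.S i (j : ℕ)))
        + k ⟨i, j, 1⟩ * (Tc' φ m (N.uuW i j) (N.Y i) + Tc' φ m (N.uuW i j) (N.S i (j : ℕ))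
          - Tc' φ m (N.uuW i j) (N.U i ((j : ℕ) + 1)))
        + k ⟨i, j, 2⟩ * (Tc' φ m (N.uuW i j) (N.Y i) + Tc' φ m (N.uuW i j) (N.S i ((j : ℕ) + 1))
          - Tc' φ m (N.uuW i j) (N.U i ((j : ℕ) + 1)))) := by
  rw [lieD_rhs_eq, MvPolynomial.coeff_sum]
  refine Finset.sum_congr rfl fun i _ => ?_
  rw [MvPolynomial.coeff_sum]
  refine Finset.sum_congr rfl fun j _ => ?_
  simp only [coeff_add, coeff_C_mul, sub_mul, add_mul, coeff_sub, Tc_eq]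


/-! ### Finsupp helper lemmas -/

theorem fh_pp_le {a b y : σ} {t : ℕ}
    (h : single a 1 + single b 1 ≤ single y t) : a = y ∧ b = y := by
  have H := fun x => Finsupp.le_def.mp h x
  simp only [Finsupp.add_apply, Finsupp.single_apply] at H
  constructor
  · by_contra hay
    have ha := H a
    rw [if_pos rfl, if_neg (fun hh : y = a => hay hh.symm)] at ha
    split_ifs at ha <;> omega
  · by_contra hby
    have hb := H b
    rw [if_pos rfl, if_neg (fun hh : y = b => hby hh.symm)] at hb
    split_ifs at hb <;> omega

theorem fh_le_u {u y z : σ} {r : ℕ}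
    (h : single u 1 ≤ single y r + single z 1) : u = y ∨ u = z := by
  by_contra hc
  push_neg at hc
  have hu := Finsupp.le_def.mp h u
  simp only [Finsupp.add_apply, Finsupp.single_apply] at hu
  rw [if_neg (fun hh : y = u => hc.1 hh.symm),
    if_neg (fun hh : z = u => hc.2 hh.symm)] at hu
  simp only [if_true] at hu
  omega

theorem fh_le_ys {a b y z : σ} {r : ℕ} (hzy : z ≠ y) (hab : a ≠ b)
    (h : single a 1 + single b 1 ≤ single y r + single z 1) :
    (a = y ∧ b = z ∧ 1 ≤ r) ∨ (a = z ∧ b = y ∧ 1 ≤ r) := by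
  have H := fun x => Finsupp.le_def.mp h x
  simp only [Finsupp.add_apply, Finsupp.single_apply] at H
  by_cases hay : a = y
  · have hbz : b = z := by
      by_contra hbz
      have hb := H b
      rw [if_neg hab, if_pos rfl, if_neg (fun hh : z = b => hbz hh.symm)] at hb
      by_cases hby : y = b
      · exact hab (hay.trans hby)
      · rw [if_neg hby] at hb
        omega
    left
    refine ⟨hay, hbz, ?_⟩
    have hy := H y
    rw [if_pos hay, if_pos rfl, if_neg hzy] at hy
    split_ifs at hy <;> omega
  · have haz : a = z := by
      by_contra haz
      have ha := H a
      rw [if_pos rfl, if_neg (fun hh : y = a => hay hh.symm),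
        if_neg (fun hh : z = a => haz hh.symm)] at ha
      split_ifs at ha <;> omega
    have hby : b = y := by
      by_contra hby
      have hb := H b
      rw [if_neg hab, if_pos rfl, if_neg (fun hh : y = b => hby hh.symm)] at hb
      by_cases hzb : z = b
      · exact hab (haz.trans hzb)
      · rw [if_neg hzb] at hb
        omega
    right
    refine ⟨haz, hby, ?_⟩
    have hy := H y
    rw [if_neg hay, if_pos hby, if_pos rfl, if_neg hzy] at hy
    omega

theorem fh_sub_z {y z : σ} (r : ℕ) :
    (single y r + single z 1) - single z 1 = single y r :=
  add_tsub_cancel_right _ _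

theorem fh_sub_ys {y z : σ} {r : ℕ} (hr : 1 ≤ r) :
    (single y r + single z 1) - (single y 1 + single z 1) = single y (r - 1) := by
  have h2 : single y r + single z 1 = single y (r - 1) + (single y 1 + single z 1) := by
    rw [← add_assoc, ← Finsupp.single_add, Nat.sub_add_cancel hr]
  rw [h2, add_tsub_cancel_right]

theorem fh_sub_ys' {y z : σ} {r : ℕ} (hr : 1 ≤ r) :
    (single y r + single z 1) - (single z 1 + single y 1) = single y (r - 1) := by
  rw [add_comm (single z 1)]
  exact fh_sub_ys hr

theorem fh_merge {y : σ} (q : ℕ) : single y q + single y 1 = single y (q + 1) := by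
  rw [← Finsupp.single_add]

theorem fh_eq_single {y z s : σ} {r : ℕ} (hzy : z ≠ y)
    (h : single y r + single z 1 = single s 1) : z = s ∧ r = 0 := by
  have H := fun x => congrArg (fun f => f x) h
  simp only [Finsupp.add_apply, Finsupp.single_apply] at H
  have hsz : s = z := by
    have hz := H z
    rw [if_neg (fun hh : y = z => hzy hh.symm), if_pos rfl] at hz
    by_contra hc
    rw [if_neg hc] at hz
    omega
  refine ⟨hsz.symm, ?_⟩
  have hy := H y
  rw [if_pos rfl, if_neg hzy] at hy
  by_cases hsy : s = y
  · exact absurd (hsz.symm.trans hsy) hzy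
  · rw [if_neg hsy] at hy
    omega

theorem fh_pure_ne {y s : σ} {t : ℕ} (hys : y ≠ s) :
    single y t ≠ (single s 1 : σ →₀ ℕ) := by
  intro h
  have := congrArg (fun f => f s) h
  simp only [Finsupp.single_apply, if_pos rfl, if_neg hys] at this
  exact one_ne_zero this.symm

theorem fh_ys_le_chain {y s : σ} (q : ℕ) :
    single y 1 + single s 1 ≤ single y (q + 1) + single s 1 := by
  rw [Finsupp.le_def]
  intro x
  simp only [Finsupp.add_apply, Finsupp.single_apply]
  split_ifs <;> omega

/-! ### Weight functions -/

open Classical in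
/-- Primary level weight on non-intermediate species. -/
noncomputable def mu0 (N : A1Network σ) (i₁ : N.ι) (n : ℕ) (x : σ) : ℤ :=
  if h : ∃ j, j ≤ N.L i₁ ∧ x = N.S i₁ j then (n : ℤ) - (h.choose : ℤ) else (n : ℤ)

open Classical in
/-- Primary enzyme-count weight on non-intermediate species. -/
noncomputable def beta0 (N : A1Network σ) (i₁ : N.ι) (n : ℕ) (x : σ) : ℤ :=
  if h : ∃ j, j ≤ N.L i₁ ∧ x = N.S i₁ j then (h.choose : ℤ) - (n : ℤ) else 1 - (n : ℤ)

open Classical in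
/-- Full level weight. -/
noncomputable def muF (N : A1Network σ) (i₁ : N.ι) (n : ℕ) (x : σ) : ℤ :=
  if h : N.inter x then
    min (min (mu0 N i₁ n (N.Y h.choose)) (mu0 N i₁ n (N.S h.choose (h.choose_spec.choose : ℕ))))
      (mu0 N i₁ n (N.S h.choose ((h.choose_spec.choose : ℕ) + 1))) + 1
  else mu0 N i₁ n x

open Classical in
/-- Full enzyme-count weight. -/
noncomputable def betaF (N : A1Network σ) (i₁ : N.ι) (n : ℕ) (x : σ) : ℤ :=
  if h : N.inter x then
    max (max (beta0 N i₁ n (N.Y h.choose)) (beta0 N i₁ n (N.S h.choose (h.choose_spec.choose : ℕ))))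
      (beta0 N i₁ n (N.S h.choose ((h.choose_spec.choose : ℕ) + 1)))
  else beta0 N i₁ n x

theorem mu0_S (N : A1Network σ) (i₁ : N.ι) (n : ℕ) (h1 : N.Assumption1) {j : ℕ}
    (hj : j ≤ N.L i₁) : mu0 N i₁ n (N.S i₁ j) = (n : ℤ) - j := by
  have hex : ∃ j', j' ≤ N.L i₁ ∧ N.S i₁ j = N.S i₁ j' := ⟨j, hj, rfl⟩
  rw [mu0, dif_pos hex]
  have hspec := hex.choose_spec
  have := h1.S_inj i₁ j hex.choose hj hspec.1 hspec.2
  omega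

theorem beta0_S (N : A1Network σ) (i₁ : N.ι) (n : ℕ) (h1 : N.Assumption1) {j : ℕ}
    (hj : j ≤ N.L i₁) : beta0 N i₁ n (N.S i₁ j) = (j : ℤ) - n := by
  have hex : ∃ j', j' ≤ N.L i₁ ∧ N.S i₁ j = N.S i₁ j' := ⟨j, hj, rfl⟩
  rw [beta0, dif_pos hex]
  have hspec := hex.choose_spec
  have := h1.S_inj i₁ j hex.choose hj hspec.1 hspec.2
  omega

theorem mu0_notS (N : A1Network σ) (i₁ : N.ι) (n : ℕ) {x : σ}
    (hx : ∀ j, j ≤ N.L i₁ → x ≠ N.S i₁ j) : mu0 N i₁ n x = (n : ℤ) := by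
  rw [mu0, dif_neg]
  rintro ⟨j, hj, hE⟩
  exact hx j hj hE

theorem beta0_notS (N : A1Network σ) (i₁ : N.ι) (n : ℕ) {x : σ}
    (hx : ∀ j, j ≤ N.L i₁ → x ≠ N.S i₁ j) : beta0 N i₁ n x = 1 - (n : ℤ) := by
  rw [beta0, dif_neg]
  rintro ⟨j, hj, hE⟩
  exact hx j hj hE

theorem mu0_le (N : A1Network σ) (i₁ : N.ι) (n : ℕ) (x : σ) : mu0 N i₁ n x ≤ (n : ℤ) := by
  rw [mu0]
  split_ifs with h
  · have : (0 : ℤ) ≤ (h.choose : ℤ) := Int.natCast_nonneg _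
    omega
  · exact le_refl _

theorem beta0_ge (N : A1Network σ) (i₁ : N.ι) (n : ℕ) (x : σ) :
    -(n : ℤ) ≤ beta0 N i₁ n x := by
  rw [beta0]
  split_ifs with h
  · have : (0 : ℤ) ≤ (h.choose : ℤ) := Int.natCast_nonneg _
    omega
  · omega

theorem muF_notU (N : A1Network σ) (i₁ : N.ι) (n : ℕ) {x : σ} (hx : ¬ N.inter x) :
    muF N i₁ n x = mu0 N i₁ n x := by rw [muF, dif_neg hx]

theorem betaF_notU (N : A1Network σ) (i₁ : N.ι) (n : ℕ) {x : σ} (hx : ¬ N.inter x) :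
    betaF N i₁ n x = beta0 N i₁ n x := by rw [betaF, dif_neg hx]

theorem muF_U (N : A1Network σ) (i₁ : N.ι) (n : ℕ) (h1 : N.Assumption1) (i : N.ι)
    (j : Fin (N.L i)) :
    muF N i₁ n (N.U i ((j : ℕ) + 1)) =
      min (min (mu0 N i₁ n (N.Y i)) (mu0 N i₁ n (N.S i (j : ℕ))))
        (mu0 N i₁ n (N.S i ((j : ℕ) + 1))) + 1 := by
  have hin : N.inter (N.U i ((j : ℕ) + 1)) := ⟨i, j, rfl⟩
  rw [muF, dif_pos hin]
  have key : ∀ (i' : N.ι) (j' : Fin (N.L i')), N.U i' ((j' : ℕ) + 1) = N.U i ((j : ℕ) + 1) →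
      min (min (mu0 N i₁ n (N.Y i')) (mu0 N i₁ n (N.S i' (j' : ℕ))))
        (mu0 N i₁ n (N.S i' ((j' : ℕ) + 1)))
      = min (min (mu0 N i₁ n (N.Y i)) (mu0 N i₁ n (N.S i (j : ℕ))))
        (mu0 N i₁ n (N.S i ((j : ℕ) + 1))) := by
    intro i' j' heq
    obtain ⟨hi, hj⟩ := h1.U_inj i' j' i j heq
    subst hi
    rw [hj]
  rw [key hin.choose hin.choose_spec.choose hin.choose_spec.choose_spec.symm]

theorem betaF_U (N : A1Network σ) (i₁ : N.ι) (n : ℕ) (h1 : N.Assumption1) (i : N.ι)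
    (j : Fin (N.L i)) :
    betaF N i₁ n (N.U i ((j : ℕ) + 1)) =
      max (max (beta0 N i₁ n (N.Y i)) (beta0 N i₁ n (N.S i (j : ℕ))))
        (beta0 N i₁ n (N.S i ((j : ℕ) + 1))) := by
  have hin : N.inter (N.U i ((j : ℕ) + 1)) := ⟨i, j, rfl⟩
  rw [betaF, dif_pos hin]
  have key : ∀ (i' : N.ι) (j' : Fin (N.L i')), N.U i' ((j' : ℕ) + 1) = N.U i ((j : ℕ) + 1) →
      max (max (beta0 N i₁ n (N.Y i')) (beta0 N i₁ n (N.S i' (j' : ℕ))))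
        (beta0 N i₁ n (N.S i' ((j' : ℕ) + 1)))
      = max (max (beta0 N i₁ n (N.Y i)) (beta0 N i₁ n (N.S i (j : ℕ))))
        (beta0 N i₁ n (N.S i ((j : ℕ) + 1))) := by
    intro i' j' heq
    obtain ⟨hi, hj⟩ := h1.U_inj i' j' i j heq
    subst hi
    rw [hj]
  rw [key hin.choose hin.choose_spec.choose hin.choose_spec.choose_spec.symm]


theorem fh_le_u_pure {u y : σ} {t : ℕ} (h : single u 1 ≤ single y t) : u = y := by
  by_contra hc
  have hu := Finsupp.le_def.mp h u
  simp only [Finsupp.single_apply] at hu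
  rw [if_neg (fun hh : y = u => hc hh.symm)] at hu
  simp only [if_true] at hu
  omega

theorem notinter_S (N : A1Network σ) (h1 : N.Assumption1) (i : N.ι) (j : ℕ)
    (hj : j ≤ N.L i) : ¬ N.inter (N.S i j) := by
  rintro ⟨i', j', hE⟩
  exact h1.U_ne_S i' j' i j hj hE.symm

theorem notinter_Y (N : A1Network σ) (h1 : N.Assumption1) (i : N.ι) :
    ¬ N.inter (N.Y i) := by
  rintro ⟨i', j', hE⟩
  exact h1.U_ne_Y i' j' i hE.symm

theorem conE1 (N : A1Network σ) (i₁ : N.ι) (n : ℕ) (h1 : N.Assumption1) (i : N.ι)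
    (j : Fin (N.L i)) :
    (muF N i₁ n (N.U i ((j : ℕ) + 1)) ≤ mu0 N i₁ n (N.Y i) + 1 ∧
      muF N i₁ n (N.U i ((j : ℕ) + 1)) ≤ mu0 N i₁ n (N.S i (j : ℕ)) + 1 ∧
      muF N i₁ n (N.U i ((j : ℕ) + 1)) ≤ mu0 N i₁ n (N.S i ((j : ℕ) + 1)) + 1) ∧
    (beta0 N i₁ n (N.Y i) ≤ betaF N i₁ n (N.U i ((j : ℕ) + 1)) ∧
      beta0 N i₁ n (N.S i (j : ℕ)) ≤ betaF N i₁ n (N.U i ((j : ℕ) + 1)) ∧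
      beta0 N i₁ n (N.S i ((j : ℕ) + 1)) ≤ betaF N i₁ n (N.U i ((j : ℕ) + 1))) := by
  rw [muF_U N i₁ n h1 i j, betaF_U N i₁ n h1 i j]
  omega

theorem conE2 (N : A1Network σ) (i₁ : N.ι) (n : ℕ) (h1 : N.Assumption1)
    (hyS : ∀ j', j' ≤ N.L i₁ → N.S i₁ j' ≠ N.Y i₁)
    (hCT : ∀ i, N.Y i = N.Y i₁ → ∀ j j', j ≤ N.L i → j' ≤ N.L i₁ →
      N.S i j = N.S i₁ j' → i = i₁)
    (i : N.ι) (j : Fin (N.L i)) (hYy : N.Y i = N.Y i₁) :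
    mu0 N i₁ n (N.S i (j : ℕ)) ≤ muF N i₁ n (N.U i ((j : ℕ) + 1)) ∧
    betaF N i₁ n (N.U i ((j : ℕ) + 1)) ≤ beta0 N i₁ n (N.S i (j : ℕ)) + 1 := by
  have hU := muF_U N i₁ n h1 i j
  have hB := betaF_U N i₁ n h1 i j
  have vY : mu0 N i₁ n (N.Y i₁) = (n : ℤ) :=
    mu0_notS N i₁ n (fun j' hj' hE => hyS j' hj' hE.symm)
  have vYb : beta0 N i₁ n (N.Y i₁) = 1 - (n : ℤ) :=
    beta0_notS N i₁ n (fun j' hj' hE => hyS j' hj' hE.symm)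
  by_cases hin : ∃ j'', j'' ≤ N.L i₁ ∧ N.S i (j : ℕ) = N.S i₁ j''
  · obtain ⟨j'', hj'', hEq⟩ := hin
    have hii : i = i₁ := hCT i hYy (j : ℕ) j'' (le_of_lt j.isLt) hj'' hEq
    have hjL : (j : ℕ) < N.L i₁ := by rw [← hii]; exact j.isLt
    have hSS : ∀ x : ℕ, N.S i x = N.S i₁ x := fun x => by rw [hii]
    have v2 : mu0 N i₁ n (N.S i (j : ℕ)) = (n : ℤ) - (j : ℕ) := by
      rw [hSS]; exact mu0_S N i₁ n h1 (le_of_lt hjL)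
    have v3 : mu0 N i₁ n (N.S i ((j : ℕ) + 1)) = (n : ℤ) - (((j : ℕ) + 1 : ℕ) : ℤ) := by
      rw [hSS]; exact mu0_S N i₁ n h1 hjL
    have v2b : beta0 N i₁ n (N.S i (j : ℕ)) = ((j : ℕ) : ℤ) - n := by
      rw [hSS]; exact beta0_S N i₁ n h1 (le_of_lt hjL)
    have v3b : beta0 N i₁ n (N.S i ((j : ℕ) + 1)) = (((j : ℕ) + 1 : ℕ) : ℤ) - n := by
      rw [hSS]; exact beta0_S N i₁ n h1 hjL
    rw [hU, hB, hYy, vY, vYb, v2, v3, v2b, v3b]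
    push_cast
    omega
  · have hnotin : ∀ j'', j'' ≤ N.L i₁ → N.S i (j : ℕ) ≠ N.S i₁ j'' :=
      fun j'' hj'' hE => hin ⟨j'', hj'', hE⟩
    have hnotin1 : ∀ j'', j'' ≤ N.L i₁ → N.S i ((j : ℕ) + 1) ≠ N.S i₁ j'' := by
      intro j'' hj'' hE
      have hii : i = i₁ := hCT i hYy ((j : ℕ) + 1) j'' j.isLt hj'' hE
      exact hnotin (j : ℕ) (by rw [← hii]; exact le_of_lt j.isLt)
        (congrArg (fun ii => N.S ii (j : ℕ)) hii)
    have v2 := mu0_notS N i₁ n hnotin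
    have v3 := mu0_notS N i₁ n hnotin1
    have v2b := beta0_notS N i₁ n hnotin
    have v3b := beta0_notS N i₁ n hnotin1
    rw [hU, hB, hYy, vY, vYb, v2, v3, v2b, v3b]
    omega

theorem conE2' (N : A1Network σ) (i₁ : N.ι) (n : ℕ) (h1 : N.Assumption1)
    (hyS : ∀ j', j' ≤ N.L i₁ → N.S i₁ j' ≠ N.Y i₁)
    (hSy : ∀ i j, j ≤ N.L i → N.S i j = N.Y i₁ → ∀ j' j'', j' ≤ N.L i →
      j'' ≤ N.L i₁ → N.S i j' ≠ N.S i₁ j'')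
    (i : N.ι) (j : Fin (N.L i)) (hSjy : N.S i (j : ℕ) = N.Y i₁) :
    mu0 N i₁ n (N.Y i) ≤ muF N i₁ n (N.U i ((j : ℕ) + 1)) ∧
    betaF N i₁ n (N.U i ((j : ℕ) + 1)) ≤ beta0 N i₁ n (N.Y i) + 1 := by
  have hU := muF_U N i₁ n h1 i j
  have hB := betaF_U N i₁ n h1 i j
  have v2 : mu0 N i₁ n (N.S i (j : ℕ)) = (n : ℤ) :=
    mu0_notS N i₁ n (fun j'' hj'' hE => hyS j'' hj'' (hE.symm.trans hSjy))
  have v2b : beta0 N i₁ n (N.S i (j : ℕ)) = 1 - (n : ℤ) :=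
    beta0_notS N i₁ n (fun j'' hj'' hE => hyS j'' hj'' (hE.symm.trans hSjy))
  have v3 : mu0 N i₁ n (N.S i ((j : ℕ) + 1)) = (n : ℤ) :=
    mu0_notS N i₁ n (fun j'' hj'' hE =>
      hSy i (j : ℕ) (le_of_lt j.isLt) hSjy ((j : ℕ) + 1) j'' j.isLt hj'' hE)
  have v3b : beta0 N i₁ n (N.S i ((j : ℕ) + 1)) = 1 - (n : ℤ) :=
    beta0_notS N i₁ n (fun j'' hj'' hE =>
      hSy i (j : ℕ) (le_of_lt j.isLt) hSjy ((j : ℕ) + 1) j'' j.isLt hj'' hE)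
  have hle := mu0_le N i₁ n (N.Y i)
  have hge := beta0_ge N i₁ n (N.Y i)
  rw [hU, hB, v2, v3, v2b, v3b]
  omega


theorem prW_def (N : A1Network σ) (i : N.ι) (j : Fin (N.L i)) :
    N.prW i j = single (N.Y i) 1 + single (N.S i (j : ℕ)) 1 := rfl

theorem uuW_def (N : A1Network σ) (i : N.ι) (j : Fin (N.L i)) :
    N.uuW i j = single (N.U i ((j : ℕ) + 1)) 1 := rfl

theorem deriv_succ (N : A1Network σ) (k : N.Param → ℝ) (ℓ : ℕ) (x : σ) :
    N.deriv k (ℓ + 1) x = lieD (N.rhs k) (N.deriv k ℓ x) := rfl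

theorem vanish (N : A1Network σ) (i₁ : N.ι) (n : ℕ) (h1 : N.Assumption1)
    (hYS : ∀ i j, j ≤ N.L i → N.Y i ≠ N.S i j)
    (hyS : ∀ j', j' ≤ N.L i₁ → N.S i₁ j' ≠ N.Y i₁)
    (hCT : ∀ i, N.Y i = N.Y i₁ → ∀ j j', j ≤ N.L i → j' ≤ N.L i₁ →
      N.S i j = N.S i₁ j' → i = i₁)
    (hSy : ∀ i j, j ≤ N.L i → N.S i j = N.Y i₁ → ∀ j' j'', j' ≤ N.L i →
      j'' ≤ N.L i₁ → N.S i j' ≠ N.S i₁ j'')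
    (k : N.Param → ℝ) (hnL : n ≤ N.L i₁) :
    ∀ ℓ : ℕ,
      (∀ t : ℕ, coeff (single (N.Y i₁) t) (N.deriv k ℓ (N.S i₁ n)) = 0) ∧
      (∀ (r : ℕ) (z : σ), z ≠ N.Y i₁ →
        ((ℓ : ℤ) < (r : ℤ) + muF N i₁ n z ∨ (r : ℤ) + betaF N i₁ n z < 0) →
        coeff (single (N.Y i₁) r + single z 1) (N.deriv k ℓ (N.S i₁ n)) = 0) := by
  intro ℓ
  induction ℓ with
  | zero =>
    constructor
    · intro t
      show coeff (single (N.Y i₁) t) (X (N.S i₁ n)) = 0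
      rw [coeff_X', if_neg]
      intro h
      exact fh_pure_ne (fun hE : N.Y i₁ = N.S i₁ n => hyS n hnL hE.symm) h.symm
    · intro r z hzy hbad
      show coeff (single (N.Y i₁) r + single z 1) (X (N.S i₁ n)) = 0
      rw [coeff_X', if_neg]
      intro h
      obtain ⟨hz, hr⟩ := fh_eq_single hzy h.symm
      subst hz
      subst hr
      have hni : ¬ N.inter (N.S i₁ n) := notinter_S N h1 i₁ n hnL
      rw [muF_notU N i₁ n hni, betaF_notU N i₁ n hni, mu0_S N i₁ n h1 hnL,
        beta0_S N i₁ n h1 hnL] at hbad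
      omega
  | succ ℓ IH =>
    obtain ⟨IHp, IHm⟩ := IH
    have key : ∀ m : σ →₀ ℕ,
        (∀ (i : N.ι) (j : Fin (N.L i)) (A : σ) (w : σ →₀ ℕ),
          (w = N.prW i j ∧
              (A = N.U i ((j : ℕ) + 1) ∨ A = N.Y i ∨ A = N.S i (j : ℕ)) ∨
            w = N.uuW i j ∧
              (A = N.U i ((j : ℕ) + 1) ∨ A = N.Y i ∨ A = N.S i (j : ℕ) ∨
                A = N.S i ((j : ℕ) + 1))) →
          w ≤ m → coeff (m - w + single A 1) (N.deriv k ℓ (N.S i₁ n)) = 0) →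
        coeff m (N.deriv k (ℓ + 1) (N.S i₁ n)) = 0 := by
      intro m hz
      rw [deriv_succ, coeff_lieD_rhs]
      refine Finset.sum_eq_zero fun i _ => Finset.sum_eq_zero fun j _ => ?_
      rw [Tc_zero (hz i j _ _ (Or.inl ⟨rfl, Or.inl rfl⟩)),
        Tc_zero (hz i j _ _ (Or.inl ⟨rfl, Or.inr (Or.inl rfl)⟩)),
        Tc_zero (hz i j _ _ (Or.inl ⟨rfl, Or.inr (Or.inr rfl)⟩)),
        Tc_zero (hz i j _ _ (Or.inr ⟨rfl, Or.inl rfl⟩)),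
        Tc_zero (hz i j _ _ (Or.inr ⟨rfl, Or.inr (Or.inl rfl)⟩)),
        Tc_zero (hz i j _ _ (Or.inr ⟨rfl, Or.inr (Or.inr (Or.inl rfl))⟩)),
        Tc_zero (hz i j _ _ (Or.inr ⟨rfl, Or.inr (Or.inr (Or.inr rfl))⟩))]
      ring
    constructor
    · -- pure powers
      intro t
      refine key _ fun i j A w hAw hle => ?_
      exfalso
      rcases hAw with ⟨hw, _⟩ | ⟨hw, _⟩
      · subst hw
        rw [prW_def] at hle
        obtain ⟨hYy, hSjy⟩ := fh_pp_le hle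
        exact hYS i (j : ℕ) (le_of_lt j.isLt) (hYy.trans hSjy.symm)
      · subst hw
        rw [uuW_def] at hle
        exact h1.U_ne_Y i j i₁ (fh_le_u_pure hle)
    · -- mixed monomials
      intro r z hzy hbad
      refine key _ fun i j A w hAw hle => ?_
      rcases hAw with ⟨hw, hA⟩ | ⟨hw, hA⟩
      · -- w = Y + S complex
        subst hw
        rw [prW_def] at hle
        rcases fh_le_ys hzy (hYS i (j : ℕ) (le_of_lt j.isLt)) hle with
          ⟨hYiy, hSjz, hr⟩ | ⟨hYiz, hSjy, hr⟩
        · -- Y i = y, S i j = z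
          have hsub : single (N.Y i₁) r + single z 1 - N.prW i j =
              single (N.Y i₁) (r - 1) := by
            rw [prW_def, hYiy, hSjz]
            exact fh_sub_ys hr
          have hzni : ¬ N.inter z := by
            rw [← hSjz]
            exact notinter_S N h1 i (j : ℕ) (le_of_lt j.isLt)
          have hmuz : muF N i₁ n z = mu0 N i₁ n z := muF_notU N i₁ n hzni
          have hbetaz : betaF N i₁ n z = beta0 N i₁ n z := betaF_notU N i₁ n hzni
          rcases hA with rfl | rfl | rfl
          · -- source y^(r-1) U
            have hcon := conE2 N i₁ n h1 hyS hCT i j hYiy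
            rw [hSjz] at hcon
            rw [hsub]
            refine IHm (r - 1) _ (h1.U_ne_Y i j i₁) ?_
            rw [hmuz, hbetaz] at hbad
            omega
          · -- source pure power
            rw [hsub, hYiy, fh_merge]
            exact IHp _
          · -- source y^(r-1) z
            rw [hsub, hSjz]
            refine IHm (r - 1) z hzy ?_
            omega
        · -- Y i = z, S i j = y
          have hsub : single (N.Y i₁) r + single z 1 - N.prW i j =
              single (N.Y i₁) (r - 1) := by
            rw [prW_def, hYiz, hSjy]
            exact fh_sub_ys' hr
          have hzni : ¬ N.inter z := by
            rw [← hYiz]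
            exact notinter_Y N h1 i
          have hmuz : muF N i₁ n z = mu0 N i₁ n z := muF_notU N i₁ n hzni
          have hbetaz : betaF N i₁ n z = beta0 N i₁ n z := betaF_notU N i₁ n hzni
          rcases hA with rfl | rfl | rfl
          · -- source y^(r-1) U
            have hcon := conE2' N i₁ n h1 hyS hSy i j hSjy
            rw [hYiz] at hcon
            rw [hsub]
            refine IHm (r - 1) _ (h1.U_ne_Y i j i₁) ?_
            rw [hmuz, hbetaz] at hbad
            omega
          · -- source y^(r-1) z
            rw [hsub, hYiz]
            refine IHm (r - 1) z hzy ?_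
            omega
          · -- source pure power
            rw [hsub, hSjy, fh_merge]
            exact IHp _
      · -- w = intermediate
        subst hw
        rw [uuW_def] at hle
        rcases fh_le_u hle with hUy | hUz
        · exact absurd hUy (h1.U_ne_Y i j i₁)
        · have hsub : single (N.Y i₁) r + single z 1 - N.uuW i j =
              single (N.Y i₁) r := by
            rw [uuW_def, hUz]
            exact fh_sub_z r
          rw [← hUz] at hbad
          have hE1 := conE1 N i₁ n h1 i j
          rcases hA with rfl | rfl | rfl | rfl
          · -- source is the target itself
            rw [hsub, hUz]
            refine IHm r z hzy ?_
            rw [← hUz]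
            omega
          · -- source y^r (Y i)
            by_cases hYiy : N.Y i = N.Y i₁
            · rw [hsub, hYiy, fh_merge]
              exact IHp _
            · rw [hsub]
              refine IHm r (N.Y i) hYiy ?_
              have hni := notinter_Y N h1 i
              rw [muF_notU N i₁ n hni, betaF_notU N i₁ n hni]
              omega
          · -- source y^r (S i j)
            by_cases hSjy : N.S i (j : ℕ) = N.Y i₁
            · rw [hsub, hSjy, fh_merge]
              exact IHp _
            · rw [hsub]
              refine IHm r (N.S i (j : ℕ)) hSjy ?_
              have hni := notinter_S N h1 i (j : ℕ) (le_of_lt j.isLt)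
              rw [muF_notU N i₁ n hni, betaF_notU N i₁ n hni]
              omega
          · -- source y^r (S i (j+1))
            by_cases hSjy : N.S i ((j : ℕ) + 1) = N.Y i₁
            · rw [hsub, hSjy, fh_merge]
              exact IHp _
            · rw [hsub]
              refine IHm r (N.S i ((j : ℕ) + 1)) hSjy ?_
              have hni := notinter_S N h1 i ((j : ℕ) + 1) j.isLt
              rw [muF_notU N i₁ n hni, betaF_notU N i₁ n hni]
              omega


theorem fh_single_le {y z : σ} (r : ℕ) :
    (single z 1 : σ →₀ ℕ) ≤ single y r + single z 1 := le_add_self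

theorem Tc_eval {φ : MvPolynomial σ ℝ} {m w e : σ →₀ ℕ} {A : σ}
    (hle : w ≤ m) (hsub : m - w = e) :
    Tc' φ m w A = ((e A : ℕ) + 1 : ℝ) * coeff (e + single A 1) φ := by
  rw [Tc', if_pos hle, hsub]

theorem valU1 (N : A1Network σ) (i₁ : N.ι) (n : ℕ) (h1 : N.Assumption1)
    (hyS : ∀ j', j' ≤ N.L i₁ → N.S i₁ j' ≠ N.Y i₁) (j : Fin (N.L i₁)) :
    muF N i₁ n (N.U i₁ ((j : ℕ) + 1)) = (n : ℤ) - (j : ℕ) ∧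
    betaF N i₁ n (N.U i₁ ((j : ℕ) + 1)) = ((j : ℕ) : ℤ) + 1 - (n : ℤ) := by
  rw [muF_U N i₁ n h1 i₁ j, betaF_U N i₁ n h1 i₁ j,
    mu0_notS N i₁ n (fun j' hj' hE => hyS j' hj' hE.symm),
    beta0_notS N i₁ n (fun j' hj' hE => hyS j' hj' hE.symm),
    mu0_S N i₁ n h1 (le_of_lt j.isLt), mu0_S N i₁ n h1 j.isLt,
    beta0_S N i₁ n h1 (le_of_lt j.isLt), beta0_S N i₁ n h1 j.isLt]
  constructor <;> push_cast <;> omega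

theorem stepOdd (N : A1Network σ) (i₁ : N.ι) (n : ℕ) (h1 : N.Assumption1)
    (hYS : ∀ i j, j ≤ N.L i → N.Y i ≠ N.S i j)
    (hyS : ∀ j', j' ≤ N.L i₁ → N.S i₁ j' ≠ N.Y i₁)
    (hCT : ∀ i, N.Y i = N.Y i₁ → ∀ j j', j ≤ N.L i → j' ≤ N.L i₁ →
      N.S i j = N.S i₁ j' → i = i₁)
    (hSy : ∀ i j, j ≤ N.L i → N.S i j = N.Y i₁ → ∀ j' j'', j' ≤ N.L i →
      j'' ≤ N.L i₁ → N.S i j' ≠ N.S i₁ j'')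
    (k : N.Param → ℝ) (hnL : n ≤ N.L i₁) (q : ℕ) (hqn : q + 1 < n)
    (j₀ : Fin (N.L i₁)) (hval : (j₀ : ℕ) = n - q - 1) :
    coeff (single (N.Y i₁) q + single (N.U i₁ (n - q)) 1) (N.deriv k (2*q+1) (N.S i₁ n))
      = k ⟨i₁, j₀, 2⟩ *
        coeff (single (N.Y i₁) q + single (N.S i₁ (n - q)) 1) (N.deriv k (2*q) (N.S i₁ n)) := by
  obtain ⟨hVp, hVm⟩ := vanish N i₁ n h1 hYS hyS hCT hSy k hnL (2*q)
  set φ := N.deriv k (2*q) (N.S i₁ n) with hφ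
  set m : σ →₀ ℕ := single (N.Y i₁) q + single (N.U i₁ (n - q)) 1 with hmdef
  have hUeq : N.U i₁ ((j₀ : ℕ) + 1) = N.U i₁ (n - q) := by
    rw [hval, show n - q - 1 + 1 = n - q from by omega]
  have hu_ne_y : N.U i₁ (n - q) ≠ N.Y i₁ := hUeq ▸ h1.U_ne_Y i₁ j₀ i₁
  have blockZero : ∀ (i : N.ι) (j : Fin (N.L i)), i ≠ i₁ ∨ (j : ℕ) ≠ (j₀ : ℕ) →
      (k ⟨i, j, 0⟩ * (Tc' φ m (N.prW i j) (N.U i ((j : ℕ) + 1))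
          - Tc' φ m (N.prW i j) (N.Y i) - Tc' φ m (N.prW i j) (N.S i (j : ℕ)))
        + k ⟨i, j, 1⟩ * (Tc' φ m (N.uuW i j) (N.Y i) + Tc' φ m (N.uuW i j) (N.S i (j : ℕ))
          - Tc' φ m (N.uuW i j) (N.U i ((j : ℕ) + 1)))
        + k ⟨i, j, 2⟩ * (Tc' φ m (N.uuW i j) (N.Y i) + Tc' φ m (N.uuW i j) (N.S i ((j : ℕ) + 1))
          - Tc' φ m (N.uuW i j) (N.U i ((j : ℕ) + 1)))) = 0 := by
    intro i j hij
    have hpr : ¬ (N.prW i j ≤ m) := by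
      intro hle
      rw [prW_def, hmdef] at hle
      rcases fh_le_ys hu_ne_y (hYS i (j : ℕ) (le_of_lt j.isLt)) hle with
        ⟨_, hSj, _⟩ | ⟨hYi, _, _⟩
      · exact (hUeq ▸ h1.U_ne_S i₁ j₀ i (j : ℕ) (le_of_lt j.isLt)) hSj.symm
      · exact (hUeq ▸ h1.U_ne_Y i₁ j₀ i) hYi.symm
    have huu : ¬ (N.uuW i j ≤ m) := by
      intro hle
      rw [uuW_def, hmdef] at hle
      rcases fh_le_u hle with hUy | hUz
      · exact h1.U_ne_Y i j i₁ hUy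
      · obtain ⟨hi, hj⟩ := h1.U_inj i j i₁ j₀ (hUz.trans hUeq.symm)
        rcases hij with hi' | hj'
        · exact hi' hi
        · exact hj' hj
    rw [Tc_zero (fun hle => absurd hle hpr), Tc_zero (fun hle => absurd hle hpr),
      Tc_zero (fun hle => absurd hle hpr), Tc_zero (fun hle => absurd hle huu),
      Tc_zero (fun hle => absurd hle huu), Tc_zero (fun hle => absurd hle huu),
      Tc_zero (fun hle => absurd hle huu)]
    ring
  rw [show (2*q+1) = (2*q)+1 from rfl, deriv_succ, coeff_lieD_rhs]
  refine Eq.trans (Finset.sum_eq_single_of_mem i₁ (Finset.mem_univ i₁)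
    fun b _ hb => Finset.sum_eq_zero fun j _ => blockZero b j (Or.inl hb)) ?_
  refine Eq.trans (Finset.sum_eq_single_of_mem j₀ (Finset.mem_univ j₀)
    fun b _ hb => blockZero i₁ b (Or.inr fun hE => hb (Fin.ext hE))) ?_
  have hpr : ¬ (N.prW i₁ j₀ ≤ m) := by
    intro hle
    rw [prW_def, hmdef] at hle
    rcases fh_le_ys hu_ne_y (hYS i₁ (j₀ : ℕ) (le_of_lt j₀.isLt)) hle with
      ⟨_, hSj, _⟩ | ⟨hYi, _, _⟩
    · exact (hUeq ▸ h1.U_ne_S i₁ j₀ i₁ (j₀ : ℕ) (le_of_lt j₀.isLt)) hSj.symm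
    · exact (hUeq ▸ h1.U_ne_Y i₁ j₀ i₁) hYi.symm
  have huule : N.uuW i₁ j₀ ≤ m := by
    rw [uuW_def, hmdef, hUeq]
    exact fh_single_le q
  have hsub : m - N.uuW i₁ j₀ = single (N.Y i₁) q := by
    rw [uuW_def, hmdef, hUeq]
    exact fh_sub_z q
  have hTcY : Tc' φ m (N.uuW i₁ j₀) (N.Y i₁) = 0 := by
    refine Tc_zero fun _ => ?_
    rw [hsub, fh_merge]
    exact hVp (q+1)
  have hTcSb : Tc' φ m (N.uuW i₁ j₀) (N.S i₁ (j₀ : ℕ)) = 0 := by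
    refine Tc_zero fun _ => ?_
    rw [hsub]
    refine hVm q (N.S i₁ (j₀ : ℕ)) (hyS _ (le_of_lt j₀.isLt)) ?_
    left
    rw [muF_notU N i₁ n (notinter_S N h1 i₁ _ (le_of_lt j₀.isLt)),
      mu0_S N i₁ n h1 (le_of_lt j₀.isLt), hval]
    omega
  have hTcU : Tc' φ m (N.uuW i₁ j₀) (N.U i₁ ((j₀ : ℕ) + 1)) = 0 := by
    refine Tc_zero fun _ => ?_
    rw [hsub, hUeq]
    refine hVm q (N.U i₁ (n - q)) hu_ne_y ?_
    left
    have hv := (valU1 N i₁ n h1 hyS j₀).1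
    rw [← hUeq, hv, hval]
    omega
  have hScoef : (single (N.Y i₁) q : σ →₀ ℕ) (N.S i₁ ((j₀ : ℕ) + 1)) = 0 :=
    Finsupp.single_eq_of_ne' (fun h => hyS _ j₀.isLt h.symm)
  have hTcS1 : Tc' φ m (N.uuW i₁ j₀) (N.S i₁ ((j₀ : ℕ) + 1))
      = coeff (single (N.Y i₁) q + single (N.S i₁ ((j₀ : ℕ) + 1)) 1) φ := by
    rw [Tc_eval huule hsub, hScoef]
    norm_num
  rw [Tc_zero (fun hle => absurd hle hpr), Tc_zero (fun hle => absurd hle hpr),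
    Tc_zero (fun hle => absurd hle hpr), hTcY, hTcSb, hTcU, hTcS1,
    show (j₀ : ℕ) + 1 = n - q from by omega]
  ring


theorem stepEven (N : A1Network σ) (i₁ : N.ι) (n : ℕ) (h1 : N.Assumption1)
    (hYS : ∀ i j, j ≤ N.L i → N.Y i ≠ N.S i j)
    (hyS : ∀ j', j' ≤ N.L i₁ → N.S i₁ j' ≠ N.Y i₁)
    (hCT : ∀ i, N.Y i = N.Y i₁ → ∀ j j', j ≤ N.L i → j' ≤ N.L i₁ →
      N.S i j = N.S i₁ j' → i = i₁)
    (hSy : ∀ i j, j ≤ N.L i → N.S i j = N.Y i₁ → ∀ j' j'', j' ≤ N.L i →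
      j'' ≤ N.L i₁ → N.S i j' ≠ N.S i₁ j'')
    (k : N.Param → ℝ) (hnL : n ≤ N.L i₁) (q : ℕ) (hqn : q + 1 < n)
    (j₀ : Fin (N.L i₁)) (hval : (j₀ : ℕ) = n - q - 1) :
    coeff (single (N.Y i₁) (q+1) + single (N.S i₁ (n - q - 1)) 1)
        (N.deriv k (2*q+2) (N.S i₁ n))
      = k ⟨i₁, j₀, 0⟩ *
        coeff (single (N.Y i₁) q + single (N.U i₁ (n - q)) 1)
          (N.deriv k (2*q+1) (N.S i₁ n)) := by
  obtain ⟨hVp, hVm⟩ := vanish N i₁ n h1 hYS hyS hCT hSy k hnL (2*q+1)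
  set φ := N.deriv k (2*q+1) (N.S i₁ n) with hφ
  set m : σ →₀ ℕ := single (N.Y i₁) (q+1) + single (N.S i₁ (n - q - 1)) 1 with hmdef
  have hsny : N.S i₁ (n - q - 1) ≠ N.Y i₁ := hyS _ (by omega)
  have hsrcS : ((2*q+1 : ℕ) : ℤ) < (q : ℤ) + muF N i₁ n (N.S i₁ (n - q - 1)) ∨
      (q : ℤ) + betaF N i₁ n (N.S i₁ (n - q - 1)) < 0 := by
    right
    rw [betaF_notU N i₁ n (notinter_S N h1 i₁ _ (by omega)),
      beta0_S N i₁ n h1 (show n - q - 1 ≤ N.L i₁ by omega)]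
    omega
  have blockZero : ∀ (i : N.ι) (j : Fin (N.L i)), i ≠ i₁ ∨ (j : ℕ) ≠ (j₀ : ℕ) →
      (k ⟨i, j, 0⟩ * (Tc' φ m (N.prW i j) (N.U i ((j : ℕ) + 1))
          - Tc' φ m (N.prW i j) (N.Y i) - Tc' φ m (N.prW i j) (N.S i (j : ℕ)))
        + k ⟨i, j, 1⟩ * (Tc' φ m (N.uuW i j) (N.Y i) + Tc' φ m (N.uuW i j) (N.S i (j : ℕ))
          - Tc' φ m (N.uuW i j) (N.U i ((j : ℕ) + 1)))
        + k ⟨i, j, 2⟩ * (Tc' φ m (N.uuW i j) (N.Y i) + Tc' φ m (N.uuW i j) (N.S i ((j : ℕ) + 1))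
          - Tc' φ m (N.uuW i j) (N.U i ((j : ℕ) + 1)))) = 0 := by
    intro i j hij
    have huu : ¬ (N.uuW i j ≤ m) := by
      intro hle
      rw [uuW_def, hmdef] at hle
      rcases fh_le_u hle with hUy | hUz
      · exact h1.U_ne_Y i j i₁ hUy
      · exact h1.U_ne_S i j i₁ (n - q - 1) (by omega) hUz
    have hprT : ∀ A : σ, (N.prW i j ≤ m →
        coeff (m - N.prW i j + single A 1) φ = 0) →
        Tc' φ m (N.prW i j) A = 0 := fun A h => Tc_zero h
    -- analysis of the complex case
    have hcase : N.prW i j ≤ m →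
        (N.Y i = N.S i₁ (n - q - 1) ∧ N.S i (j : ℕ) = N.Y i₁ ∧
          m - N.prW i j = single (N.Y i₁) q) := by
      intro hle
      rw [prW_def, hmdef] at hle
      rcases fh_le_ys hsny (hYS i (j : ℕ) (le_of_lt j.isLt)) hle with
        ⟨hYi, hSj, _⟩ | ⟨hYi, hSj, hr⟩
      · exfalso
        have hii : i = i₁ := hCT i hYi (j : ℕ) (n - q - 1) (le_of_lt j.isLt) (by omega) hSj
        have hjj : (j : ℕ) = n - q - 1 := by
          refine h1.S_inj i (j : ℕ) (n - q - 1) (le_of_lt j.isLt) (by rw [hii]; omega)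
            (hSj.trans (congrArg (fun ii => N.S ii (n - q - 1)) hii.symm))
        rcases hij with hi' | hj'
        · exact hi' hii
        · exact hj' (by rw [hjj, hval])
      · refine ⟨hYi, hSj, ?_⟩
        rw [prW_def, hmdef, hYi, hSj]
        exact fh_sub_ys' hr
    rw [hprT _ (fun hle => by
        obtain ⟨hYi, hSj, hsub⟩ := hcase hle
        rw [hsub]
        refine hVm q (N.U i ((j : ℕ) + 1)) (h1.U_ne_Y i j i₁) ?_
        left
        have hmu := muF_U N i₁ n h1 i j
        have v1 : mu0 N i₁ n (N.Y i) = (n : ℤ) - ((n - q - 1 : ℕ) : ℤ) := by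
          rw [hYi]; exact mu0_S N i₁ n h1 (by omega)
        have v2 : mu0 N i₁ n (N.S i (j : ℕ)) = (n : ℤ) := by
          rw [hSj]
          exact mu0_notS N i₁ n (fun j' hj' hE => hyS j' hj' hE.symm)
        have v3 : mu0 N i₁ n (N.S i ((j : ℕ) + 1)) = (n : ℤ) :=
          mu0_notS N i₁ n (fun j'' hj'' hE =>
            hSy i (j : ℕ) (le_of_lt j.isLt) hSj ((j : ℕ) + 1) j'' j.isLt hj'' hE)
        rw [hmu, v1, v2, v3]
        omega),
      hprT _ (fun hle => by
        obtain ⟨hYi, _, hsub⟩ := hcase hle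
        rw [hsub, hYi]
        exact hVm q (N.S i₁ (n - q - 1)) hsny hsrcS),
      hprT _ (fun hle => by
        obtain ⟨_, hSj, hsub⟩ := hcase hle
        rw [hsub, hSj, fh_merge]
        exact hVp (q+1)),
      Tc_zero (fun hle => absurd hle huu), Tc_zero (fun hle => absurd hle huu),
      Tc_zero (fun hle => absurd hle huu), Tc_zero (fun hle => absurd hle huu)]
    ring
  rw [show (2*q+2) = (2*q+1)+1 from rfl, deriv_succ, coeff_lieD_rhs]
  refine Eq.trans (Finset.sum_eq_single_of_mem i₁ (Finset.mem_univ i₁)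
    fun b _ hb => Finset.sum_eq_zero fun j _ => blockZero b j (Or.inl hb)) ?_
  refine Eq.trans (Finset.sum_eq_single_of_mem j₀ (Finset.mem_univ j₀)
    fun b _ hb => blockZero i₁ b (Or.inr fun hE => hb (Fin.ext hE))) ?_
  have hSj₀ : N.S i₁ (j₀ : ℕ) = N.S i₁ (n - q - 1) := by rw [hval]
  have hpreq : N.prW i₁ j₀ = single (N.Y i₁) 1 + single (N.S i₁ (n - q - 1)) 1 := by
    rw [prW_def, hSj₀]
  have hprle : N.prW i₁ j₀ ≤ m := by
    rw [hpreq, hmdef]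
    exact fh_ys_le_chain q
  have hsub : m - N.prW i₁ j₀ = single (N.Y i₁) q := by
    rw [hpreq, hmdef]
    exact fh_sub_ys (by omega)
  have huu : ¬ (N.uuW i₁ j₀ ≤ m) := by
    intro hle
    rw [uuW_def, hmdef] at hle
    rcases fh_le_u hle with hUy | hUz
    · exact h1.U_ne_Y i₁ j₀ i₁ hUy
    · exact h1.U_ne_S i₁ j₀ i₁ (n - q - 1) (by omega) hUz
  have hUeq : N.U i₁ ((j₀ : ℕ) + 1) = N.U i₁ (n - q) := by
    rw [hval, show n - q - 1 + 1 = n - q from by omega]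
  have hUcoef : (single (N.Y i₁) q : σ →₀ ℕ) (N.U i₁ ((j₀ : ℕ) + 1)) = 0 :=
    Finsupp.single_eq_of_ne' (fun h => h1.U_ne_Y i₁ j₀ i₁ h.symm)
  have hTcU : Tc' φ m (N.prW i₁ j₀) (N.U i₁ ((j₀ : ℕ) + 1))
      = coeff (single (N.Y i₁) q + single (N.U i₁ (n - q)) 1) φ := by
    rw [Tc_eval hprle hsub, hUcoef, hUeq]
    norm_num
  have hTcY : Tc' φ m (N.prW i₁ j₀) (N.Y i₁) = 0 := by
    refine Tc_zero fun _ => ?_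
    rw [hsub, fh_merge]
    exact hVp (q+1)
  have hTcS : Tc' φ m (N.prW i₁ j₀) (N.S i₁ (j₀ : ℕ)) = 0 := by
    refine Tc_zero fun _ => ?_
    rw [hsub, hSj₀]
    exact hVm q (N.S i₁ (n - q - 1)) hsny hsrcS
  rw [hTcU, hTcY, hTcS, Tc_zero (fun hle => absurd hle huu),
    Tc_zero (fun hle => absurd hle huu), Tc_zero (fun hle => absurd hle huu),
    Tc_zero (fun hle => absurd hle huu)]
  ring


theorem valU2 (N : A1Network σ) (i₁ i₂ : N.ι) (n : ℕ) (h1 : N.Assumption1)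
    (htS : ∀ j', j' ≤ N.L i₁ → N.S i₁ j' ≠ N.Y i₂)
    (hL : N.L i₂ = N.L i₁)
    (hS : ∀ j, j ≤ N.L i₁ → N.S i₂ j = N.S i₁ (N.L i₁ - j))
    (j : Fin (N.L i₂)) :
    muF N i₁ n (N.U i₂ ((j : ℕ) + 1)) = (n : ℤ) - N.L i₁ + (j : ℕ) + 1 ∧
    betaF N i₁ n (N.U i₂ ((j : ℕ) + 1)) = (N.L i₁ : ℤ) - (j : ℕ) - n := by
  have hjL : (j : ℕ) < N.L i₁ := hL ▸ j.isLt
  have e1 : N.S i₂ (j : ℕ) = N.S i₁ (N.L i₁ - (j : ℕ)) := hS _ (by omega)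
  have e2 : N.S i₂ ((j : ℕ) + 1) = N.S i₁ (N.L i₁ - ((j : ℕ) + 1)) := hS _ (by omega)
  rw [muF_U N i₁ n h1 i₂ j, betaF_U N i₁ n h1 i₂ j, e1, e2,
    mu0_notS N i₁ n (fun j' hj' hE => htS j' hj' hE.symm),
    beta0_notS N i₁ n (fun j' hj' hE => htS j' hj' hE.symm),
    mu0_S N i₁ n h1 (by omega), mu0_S N i₁ n h1 (by omega),
    beta0_S N i₁ n h1 (by omega), beta0_S N i₁ n h1 (by omega)]
  constructor <;> omega

theorem stepFinal (N : A1Network σ) (i₁ i₂ : N.ι) (n : ℕ) (h1 : N.Assumption1)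
    (hYS : ∀ i j, j ≤ N.L i → N.Y i ≠ N.S i j)
    (hyS : ∀ j', j' ≤ N.L i₁ → N.S i₁ j' ≠ N.Y i₁)
    (hCT : ∀ i, N.Y i = N.Y i₁ → ∀ j j', j ≤ N.L i → j' ≤ N.L i₁ →
      N.S i j = N.S i₁ j' → i = i₁)
    (hSy : ∀ i j, j ≤ N.L i → N.S i j = N.Y i₁ → ∀ j' j'', j' ≤ N.L i →
      j'' ≤ N.L i₁ → N.S i j' ≠ N.S i₁ j'')
    (htS : ∀ j', j' ≤ N.L i₁ → N.S i₁ j' ≠ N.Y i₂)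
    (hyny : N.Y i₂ ≠ N.Y i₁)
    (hL : N.L i₂ = N.L i₁)
    (hS : ∀ j, j ≤ N.L i₁ → N.S i₂ j = N.S i₁ (N.L i₁ - j))
    (k : N.Param → ℝ) (hn1 : 1 ≤ n) (hnL : n ≤ N.L i₁) (kk : ℕ) (hkk : kk ≤ n - 1)
    (j₂ : Fin (N.L i₂)) (hval2 : (j₂ : ℕ) = N.L i₁ - (n - kk)) :
    coeff (single (N.Y i₁) kk + single (N.U i₂ ((j₂ : ℕ) + 1)) 1)
        (N.deriv k (2*kk+1) (N.S i₁ n))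
      = k ⟨i₂, j₂, 1⟩ *
        coeff (single (N.Y i₁) kk + single (N.S i₁ (n - kk)) 1)
          (N.deriv k (2*kk) (N.S i₁ n)) := by
  obtain ⟨hVp, hVm⟩ := vanish N i₁ n h1 hYS hyS hCT hSy k hnL (2*kk)
  set φ := N.deriv k (2*kk) (N.S i₁ n) with hφ
  set m : σ →₀ ℕ := single (N.Y i₁) kk + single (N.U i₂ ((j₂ : ℕ) + 1)) 1 with hmdef
  have hV_ne_y : N.U i₂ ((j₂ : ℕ) + 1) ≠ N.Y i₁ := h1.U_ne_Y i₂ j₂ i₁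
  have blockZero : ∀ (i : N.ι) (j : Fin (N.L i)), i ≠ i₂ ∨ (j : ℕ) ≠ (j₂ : ℕ) →
      (k ⟨i, j, 0⟩ * (Tc' φ m (N.prW i j) (N.U i ((j : ℕ) + 1))
          - Tc' φ m (N.prW i j) (N.Y i) - Tc' φ m (N.prW i j) (N.S i (j : ℕ)))
        + k ⟨i, j, 1⟩ * (Tc' φ m (N.uuW i j) (N.Y i) + Tc' φ m (N.uuW i j) (N.S i (j : ℕ))
          - Tc' φ m (N.uuW i j) (N.U i ((j : ℕ) + 1)))
        + k ⟨i, j, 2⟩ * (Tc' φ m (N.uuW i j) (N.Y i) + Tc' φ m (N.uuW i j) (N.S i ((j : ℕ) + 1))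
          - Tc' φ m (N.uuW i j) (N.U i ((j : ℕ) + 1)))) = 0 := by
    intro i j hij
    have hpr : ¬ (N.prW i j ≤ m) := by
      intro hle
      rw [prW_def, hmdef] at hle
      rcases fh_le_ys hV_ne_y (hYS i (j : ℕ) (le_of_lt j.isLt)) hle with
        ⟨_, hSj, _⟩ | ⟨hYi, _, _⟩
      · exact h1.U_ne_S i₂ j₂ i (j : ℕ) (le_of_lt j.isLt) hSj.symm
      · exact h1.U_ne_Y i₂ j₂ i hYi.symm
    have huu : ¬ (N.uuW i j ≤ m) := by
      intro hle
      rw [uuW_def, hmdef] at hle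
      rcases fh_le_u hle with hUy | hUz
      · exact h1.U_ne_Y i j i₁ hUy
      · obtain ⟨hi, hj⟩ := h1.U_inj i j i₂ j₂ hUz
        rcases hij with hi' | hj'
        · exact hi' hi
        · exact hj' hj
    rw [Tc_zero (fun hle => absurd hle hpr), Tc_zero (fun hle => absurd hle hpr),
      Tc_zero (fun hle => absurd hle hpr), Tc_zero (fun hle => absurd hle huu),
      Tc_zero (fun hle => absurd hle huu), Tc_zero (fun hle => absurd hle huu),
      Tc_zero (fun hle => absurd hle huu)]
    ring
  rw [show (2*kk+1) = (2*kk)+1 from rfl, deriv_succ, coeff_lieD_rhs]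
  refine Eq.trans (Finset.sum_eq_single_of_mem i₂ (Finset.mem_univ i₂)
    fun b _ hb => Finset.sum_eq_zero fun j _ => blockZero b j (Or.inl hb)) ?_
  refine Eq.trans (Finset.sum_eq_single_of_mem j₂ (Finset.mem_univ j₂)
    fun b _ hb => blockZero i₂ b (Or.inr fun hE => hb (Fin.ext hE))) ?_
  have hj₂L : (j₂ : ℕ) < N.L i₁ := hL ▸ j₂.isLt
  have hpr : ¬ (N.prW i₂ j₂ ≤ m) := by
    intro hle
    rw [prW_def, hmdef] at hle
    rcases fh_le_ys hV_ne_y (hYS i₂ (j₂ : ℕ) (le_of_lt j₂.isLt)) hle with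
      ⟨_, hSj, _⟩ | ⟨hYi, _, _⟩
    · exact h1.U_ne_S i₂ j₂ i₂ (j₂ : ℕ) (le_of_lt j₂.isLt) hSj.symm
    · exact h1.U_ne_Y i₂ j₂ i₂ hYi.symm
  have huule : N.uuW i₂ j₂ ≤ m := by
    rw [uuW_def, hmdef]
    exact fh_single_le kk
  have hsub : m - N.uuW i₂ j₂ = single (N.Y i₁) kk := by
    rw [uuW_def, hmdef]
    exact fh_sub_z kk
  have hSj₂ : N.S i₂ (j₂ : ℕ) = N.S i₁ (n - kk) := by
    rw [hS _ (le_of_lt hj₂L), hval2, show N.L i₁ - (N.L i₁ - (n - kk)) = n - kk from by omega]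
  have hSj₂1 : N.S i₂ ((j₂ : ℕ) + 1) = N.S i₁ (n - kk - 1) := by
    rw [hS _ hj₂L, hval2, show N.L i₁ - (N.L i₁ - (n - kk) + 1) = n - kk - 1 from by omega]
  have hTcY : Tc' φ m (N.uuW i₂ j₂) (N.Y i₂) = 0 := by
    refine Tc_zero fun _ => ?_
    rw [hsub]
    refine hVm kk (N.Y i₂) hyny ?_
    left
    rw [muF_notU N i₁ n (notinter_Y N h1 i₂),
      mu0_notS N i₁ n (fun j' hj' hE => htS j' hj' hE.symm)]
    omega
  have hTcS1 : Tc' φ m (N.uuW i₂ j₂) (N.S i₂ ((j₂ : ℕ) + 1)) = 0 := by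
    refine Tc_zero fun _ => ?_
    rw [hsub, hSj₂1]
    refine hVm kk (N.S i₁ (n - kk - 1)) (hyS _ (by omega)) ?_
    left
    rw [muF_notU N i₁ n (notinter_S N h1 i₁ _ (by omega)),
      mu0_S N i₁ n h1 (show n - kk - 1 ≤ N.L i₁ by omega)]
    omega
  have hTcV : Tc' φ m (N.uuW i₂ j₂) (N.U i₂ ((j₂ : ℕ) + 1)) = 0 := by
    refine Tc_zero fun _ => ?_
    rw [hsub]
    refine hVm kk (N.U i₂ ((j₂ : ℕ) + 1)) hV_ne_y ?_
    left
    rw [(valU2 N i₁ i₂ n h1 htS hL hS j₂).1]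
    omega
  have hScoef : (single (N.Y i₁) kk : σ →₀ ℕ) (N.S i₂ (j₂ : ℕ)) = 0 :=
    Finsupp.single_eq_of_ne' (fun h => hyS (n - kk) (by omega) (hSj₂ ▸ h).symm)
  have hTcS : Tc' φ m (N.uuW i₂ j₂) (N.S i₂ (j₂ : ℕ))
      = coeff (single (N.Y i₁) kk + single (N.S i₁ (n - kk)) 1) φ := by
    rw [Tc_eval huule hsub, hScoef, hSj₂]
    norm_num
  rw [Tc_zero (fun hle => absurd hle hpr), Tc_zero (fun hle => absurd hle hpr),
    Tc_zero (fun hle => absurd hle hpr), hTcY, hTcS1, hTcV, hTcS]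
  ring


open Classical in
/-- The product factor `a_{n-jj} c_{n-jj}`. -/
noncomputable def AC (N : A1Network σ) (i₁ : N.ι) (k : N.Param → ℝ) (n jj : ℕ) : ℝ :=
  if h : n - jj - 1 < N.L i₁ then
    k ⟨i₁, ⟨n - jj - 1, h⟩, 0⟩ * k ⟨i₁, ⟨n - jj - 1, h⟩, 2⟩
  else 0

theorem AC_eq (N : A1Network σ) (i₁ : N.ι) (k : N.Param → ℝ) (n jj : ℕ)
    (h : n - jj - 1 < N.L i₁) :
    AC N i₁ k n jj = k ⟨i₁, ⟨n - jj - 1, h⟩, 0⟩ * k ⟨i₁, ⟨n - jj - 1, h⟩, 2⟩ := by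
  rw [AC, dif_pos h]

theorem chainEven (N : A1Network σ) (i₁ : N.ι) (n : ℕ) (h1 : N.Assumption1)
    (hYS : ∀ i j, j ≤ N.L i → N.Y i ≠ N.S i j)
    (hyS : ∀ j', j' ≤ N.L i₁ → N.S i₁ j' ≠ N.Y i₁)
    (hCT : ∀ i, N.Y i = N.Y i₁ → ∀ j j', j ≤ N.L i → j' ≤ N.L i₁ →
      N.S i j = N.S i₁ j' → i = i₁)
    (hSy : ∀ i j, j ≤ N.L i → N.S i j = N.Y i₁ → ∀ j' j'', j' ≤ N.L i →
      j'' ≤ N.L i₁ → N.S i j' ≠ N.S i₁ j'')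
    (k : N.Param → ℝ) (hn1 : 1 ≤ n) (hnL : n ≤ N.L i₁) (kk : ℕ) (hkk : kk ≤ n - 1) :
    ∀ q, q ≤ kk →
      coeff (single (N.Y i₁) q + single (N.S i₁ (n - q)) 1) (N.deriv k (2*q) (N.S i₁ n))
        = ∏ jj ∈ Finset.range q, AC N i₁ k n jj := by
  intro q
  induction q with
  | zero =>
    intro _
    rw [Finset.prod_range_zero, Nat.sub_zero]
    show coeff (single (N.Y i₁) 0 + single (N.S i₁ n) 1) (X (N.S i₁ n)) = 1
    rw [Finsupp.single_zero, zero_add, coeff_X', if_pos rfl]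
  | succ q IHq =>
    intro hq1
    have hPq := IHq (by omega)
    have hqn : q + 1 < n := by omega
    have hlt : n - q - 1 < N.L i₁ := by omega
    have hodd := stepOdd N i₁ n h1 hYS hyS hCT hSy k hnL q hqn ⟨n - q - 1, hlt⟩ rfl
    have heven := stepEven N i₁ n h1 hYS hyS hCT hSy k hnL q hqn ⟨n - q - 1, hlt⟩ rfl
    rw [show 2*(q+1) = 2*q+2 from by ring, show n - (q+1) = n - q - 1 from by omega,
      heven, hodd, hPq, Finset.prod_range_succ, AC_eq N i₁ k n q hlt]
    ring

/-- The map `ψ` on rate constants is identifiable from the set of variables `T` with `D`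
derivatives: whenever two positive rate vectors give the same derivatives
`x^{(ℓ)}`, `1 ≤ ℓ ≤ D`, `x ∈ T`, as polynomials, the values of `ψ` agree. -/
def IdentifiableFrom {α : Type*} (N : A1Network σ) (ψ : (N.Param → ℝ) → α)
    (T : Set σ) (D : ℕ) : Prop :=
  ∀ k₁ k₂ : N.Param → ℝ, (∀ r, 0 < k₁ r) → (∀ r, 0 < k₂ r) →
    (∀ x ∈ T, ∀ ℓ, 1 ≤ ℓ → ℓ ≤ D → N.deriv k₁ ℓ x = N.deriv k₂ ℓ x) →
    ψ k₁ = ψ k₂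

/-- **Lemma.** Fix two connected components `i₁`, `i₂` of a network satisfying
Assumptions 1 and 2, the second running through the same substrates in reverse order,
so the pair has the shape `Y+S₀ ⇄ U₁ → ⋯ → Y+S_L` and `Ỹ+S_L ⇄ V_L → ⋯ → Ỹ+S₀`
(the intermediate `V_j` of the second component is its Assumption-1 intermediate of
paper index `L+1-j`, and `b̃_j` is the `b`-constant of its `0`-indexed block `L-j`).
For `1 ≤ n ≤ L`, `0 ≤ kk ≤ n-1`, the monomial `y^kk · v_{n-kk}` appears in
`s_n^{(2kk+1)}` with coefficient `b̃_{n-kk} · ∏_{j=0}^{kk-1} a_{n-j} c_{n-j}`; no monomial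
`y^r · v_{n-kk}` appears in `s_n^{(ℓ)}` for `ℓ < 2kk+1`; and `y^kk · v_{n-kk}` is the only
monomial of that form appearing in `s_n^{(2kk+1)}`. -/
theorem coeff_y_pow_v
    (N : A1Network σ) (h1 : N.Assumption1) (h2 : N.Assumption2)
    (i₁ i₂ : N.ι) (hne : i₁ ≠ i₂) (hL : N.L i₂ = N.L i₁)
    (hS : ∀ j, j ≤ N.L i₁ → N.S i₂ j = N.S i₁ (N.L i₁ - j))
    (k : N.Param → ℝ) (hk : ∀ r, 0 < k r)
    (n kk : ℕ) (hn1 : 1 ≤ n) (hnL : n ≤ N.L i₁) (hkk : kk ≤ n - 1) :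
    (MvPolynomial.coeff
        (Finsupp.single (N.Y i₁) kk +
          Finsupp.single (N.U i₂ (N.L i₁ + 1 - (n - kk))) 1)
        (N.deriv k (2 * kk + 1) (N.S i₁ n))
      = k ⟨i₂, ⟨N.L i₁ - (n - kk), by omega⟩, 1⟩ *
          ∏ j ∈ Finset.range kk,
            (k ⟨i₁, ⟨n - j - 1, by omega⟩, 0⟩ * k ⟨i₁, ⟨n - j - 1, by omega⟩, 2⟩))
    ∧ (∀ ℓ < 2 * kk + 1, ∀ r : ℕ,
        MvPolynomial.coeff
          (Finsupp.single (N.Y i₁) r +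
            Finsupp.single (N.U i₂ (N.L i₁ + 1 - (n - kk))) 1)
          (N.deriv k ℓ (N.S i₁ n)) = 0)
    ∧ (∀ r : ℕ, r ≠ kk →
        MvPolynomial.coeff
          (Finsupp.single (N.Y i₁) r +
            Finsupp.single (N.U i₂ (N.L i₁ + 1 - (n - kk))) 1)
          (N.deriv k (2 * kk + 1) (N.S i₁ n)) = 0) := by
  obtain ⟨part, hint0, hcomp⟩ := h2
  have hYS : ∀ i j, j ≤ N.L i → N.Y i ≠ N.S i j := by
    intro i j hj hE
    obtain ⟨α, hα1, hαS, hαY, hαY0⟩ := hcomp i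
    exact hαY (by rw [hE]; exact hαS j hj)
  have hyS : ∀ j', j' ≤ N.L i₁ → N.S i₁ j' ≠ N.Y i₁ :=
    fun j' hj' hE => hYS i₁ j' hj' hE.symm
  have hSL : N.S i₂ 0 = N.S i₁ (N.L i₁) := by
    rw [hS 0 (Nat.zero_le _), Nat.sub_zero]
  have htS : ∀ j', j' ≤ N.L i₁ → N.S i₁ j' ≠ N.Y i₂ := by
    intro j' hj' hE
    obtain ⟨α1, _, hα1S, _, _⟩ := hcomp i₁
    obtain ⟨α2, _, hα2S, hα2Y, _⟩ := hcomp i₂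
    have e1 : part (N.S i₁ j') = α1 := hα1S j' hj'
    have h3 : part (N.S i₁ (N.L i₁)) = α2 := by
      rw [← hSL]
      exact hα2S 0 (Nat.zero_le _)
    have e2 : α2 = α1 := h3.symm.trans (hα1S (N.L i₁) (le_refl _))
    exact hα2Y (by rw [← hE]; exact e1.trans e2.symm)
  have hCT : ∀ i, N.Y i = N.Y i₁ → ∀ j j', j ≤ N.L i → j' ≤ N.L i₁ →
      N.S i j = N.S i₁ j' → i = i₁ := by
    intro i hYi j j' hj hj' hE
    exact h1.complex_unique i i₁ j j' hj hj' (fun x => by rw [hYi, hE])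
  have hSy : ∀ i j, j ≤ N.L i → N.S i j = N.Y i₁ → ∀ j' j'', j' ≤ N.L i →
      j'' ≤ N.L i₁ → N.S i j' ≠ N.S i₁ j'' := by
    intro i j hj hjy j' j'' hj' hj'' hE
    obtain ⟨αi, _, hαiS, _, _⟩ := hcomp i
    obtain ⟨α1, _, hα1S, hα1Y, _⟩ := hcomp i₁
    apply hα1Y
    calc part (N.Y i₁) = part (N.S i j) := by rw [hjy]
      _ = αi := hαiS j hj
      _ = part (N.S i j') := (hαiS j' hj').symm
      _ = part (N.S i₁ j'') := by rw [hE]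
      _ = α1 := hα1S j'' hj''
  have hyny : N.Y i₂ ≠ N.Y i₁ := by
    intro hE
    apply hne
    refine h1.complex_unique i₁ i₂ 0 (N.L i₂) (Nat.zero_le _) (le_refl _) fun x => ?_
    rw [hE, hL, hS (N.L i₁) (le_refl _), Nat.sub_self]
  have hchain := chainEven N i₁ n h1 hYS hyS hCT hSy k hn1 hnL kk hkk kk (le_refl kk)
  have hj₂lt : N.L i₁ - (n - kk) < N.L i₂ := by omega
  have hfin := stepFinal N i₁ i₂ n h1 hYS hyS hCT hSy htS hyny hL hS k hn1 hnL kk hkk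
    ⟨N.L i₁ - (n - kk), hj₂lt⟩ rfl
  rw [hchain] at hfin
  have hidx : N.L i₁ + 1 - (n - kk) = N.L i₁ - (n - kk) + 1 := by omega
  have hval := valU2 N i₁ i₂ n h1 htS hL hS ⟨N.L i₁ - (n - kk), hj₂lt⟩
  have hvc : ((⟨N.L i₁ - (n - kk), hj₂lt⟩ : Fin (N.L i₂)) : ℕ) = N.L i₁ - (n - kk) := rfl
  rw [hvc] at hval
  refine ⟨?_, ?_, ?_⟩
  · rw [hidx]
    have hprod : (∏ jj ∈ Finset.range kk, AC N i₁ k n jj)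
        = ∏ jj ∈ Finset.range kk,
            (k ⟨i₁, ⟨n - jj - 1, by omega⟩, 0⟩ * k ⟨i₁, ⟨n - jj - 1, by omega⟩, 2⟩) :=
      Finset.prod_congr rfl fun jj _ => AC_eq N i₁ k n jj (by omega)
    rw [hprod] at hfin
    exact hfin
  · intro ℓ hℓ r
    rw [hidx]
    refine (vanish N i₁ n h1 hYS hyS hCT hSy k hnL ℓ).2 r _
      (h1.U_ne_Y i₂ ⟨N.L i₁ - (n - kk), hj₂lt⟩ i₁) ?_
    show (ℓ : ℤ) < (r : ℤ) +
        muF N i₁ n (N.U i₂ (((⟨N.L i₁ - (n - kk), hj₂lt⟩ : Fin (N.L i₂)) : ℕ) + 1)) ∨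
      (r : ℤ) + betaF N i₁ n
        (N.U i₂ (((⟨N.L i₁ - (n - kk), hj₂lt⟩ : Fin (N.L i₂)) : ℕ) + 1)) < 0
    rw [hval.1, hval.2]
    omega
  · intro r hr
    rw [hidx]
    refine (vanish N i₁ n h1 hYS hyS hCT hSy k hnL (2 * kk + 1)).2 r _
      (h1.U_ne_Y i₂ ⟨N.L i₁ - (n - kk), hj₂lt⟩ i₁) ?_
    show ((2 * kk + 1 : ℕ) : ℤ) < (r : ℤ) +
        muF N i₁ n (N.U i₂ (((⟨N.L i₁ - (n - kk), hj₂lt⟩ : Fin (N.L i₂)) : ℕ) + 1)) ∨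
      (r : ℤ) + betaF N i₁ n
        (N.U i₂ (((⟨N.L i₁ - (n - kk), hj₂lt⟩ : Fin (N.L i₂)) : ℕ) + 1)) < 0
    rw [hval.1, hval.2]
    omega

end A1Network
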